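/- Let y > 1, Y = y e^{-y}, and let x ∈ (0,1) solve x - ln x = y - ln y. Define c₁ = (e-2)/(e-1), d₁ = e - 1 - c₁e, and z₁(y) = (1 - d₁Y - √((1 - d₁Y)² - 4c₁Y))/(2c₁Y). Then z₁(y)·Y < x. -/

import Mathlib

private lemma e_gt : (2.7 : ℝ) < Real.exp 1 := by
  have := Real.exp_one_gt_d9; norm_num at this ⊢; linarith

private lemma e_lt : Real.exp 1 < 2.8 := by
  have := Real.exp_one_lt_d9; norm_num at this ⊢; linarith

private lemma key_ineq (x : ℝ) (hx0 : 0 < x) (hx1 : x < 1) :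
    1 + (Real.exp 1 - 1 - (Real.exp 1 - 2) / (Real.exp 1 - 1) * Real.exp 1) * x
      < Real.exp x * (1 - (Real.exp 1 - 2) / (Real.exp 1 - 1) * x) := by
  set e : ℝ := Real.exp 1 with he
  have he1 : (2.7:ℝ) < e := e_gt
  have he2 : e < 2.8 := e_lt
  set c : ℝ := (e - 2) / (e - 1) with hc
  set d : ℝ := e - 1 - c * e with hd
  have hene1 : e - 1 ≠ 0 := by intro h; rw [sub_eq_zero] at h; linarith [h]
  have hene2 : e - 2 ≠ 0 := by intro h; rw [sub_eq_zero] at h; linarith [h]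
  have hce : c * e = e - 2 + c := by rw [hc]; field_simp; ring
  have hcpos : 0 < c := by rw [hc]; apply div_pos <;> linarith
  set g : ℝ → ℝ := fun t => Real.exp t * (1 - c * t) - 1 - d * t with hg
  set g' : ℝ → ℝ := fun t => Real.exp t * (1 - c - c * t) - d with hg'
  have hdg : ∀ t : ℝ, HasDerivAt g (g' t) t := by
    intro t
    have h1 : HasDerivAt (fun t : ℝ => 1 - c * t) (-c) t := by
      simpa using ((hasDerivAt_id t).const_mul c).const_sub 1
    have h2 := ((Real.hasDerivAt_exp t).mul h1).sub_const 1
    have h3 := h2.sub ((hasDerivAt_id t).const_mul d)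
    exact h3.congr_deriv (by simp only [hg']; ring)
  have hdg' : ∀ t : ℝ, HasDerivAt g' (Real.exp t * (1 - 2*c - c*t)) t := by
    intro t
    have h1 : HasDerivAt (fun t : ℝ => 1 - c - c * t) (-c) t := by
      simpa using ((hasDerivAt_id t).const_mul c).const_sub (1 - c)
    have h2 := ((Real.hasDerivAt_exp t).mul h1).sub_const d
    exact h2.congr_deriv (by ring)
  have hcontg : Continuous g := by
    apply Continuous.sub
    apply Continuous.sub
    exact Real.continuous_exp.mul (by continuity)
    exact continuous_const
    continuity
  have hcontg' : Continuous g' := by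
    apply Continuous.sub
    exact Real.continuous_exp.mul (by continuity)
    exact continuous_const
  set a : ℝ := (3 - e) / (e - 2) with ha
  have ha0 : 0 < a := by rw [ha]; apply div_pos <;> linarith
  have ha1 : a < 1 := by rw [ha, div_lt_one (by linarith)]; linarith
  have hca0 : 1 - 2*c - c*a = 0 := by rw [hc, ha]; field_simp; ring
  have hg'0 : g' 0 = 0 := by
    simp only [hg', Real.exp_zero, mul_zero, sub_zero, one_mul]
    rw [hd]; linarith [hce]
  have hg1 : g 1 = 0 := by
    simp only [hg, mul_one]
    rw [hd]; ring
  have hmono' : StrictMonoOn g' (Set.Icc 0 a) := by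
    apply strictMonoOn_of_deriv_pos (convex_Icc 0 a) hcontg'.continuousOn
    intro t ht
    rw [interior_Icc] at ht
    rw [(hdg' t).deriv]
    have h1 : c * t < c * a := by exact mul_lt_mul_of_pos_left ht.2 hcpos
    have h2 : 0 < 1 - 2*c - c*t := by linarith
    exact mul_pos (Real.exp_pos t) h2
  have hanti' : StrictAntiOn g' (Set.Icc a 1) := by
    apply strictAntiOn_of_deriv_neg (convex_Icc a 1) hcontg'.continuousOn
    intro t ht
    rw [interior_Icc] at ht
    rw [(hdg' t).deriv]
    have h1 : c * a < c * t := mul_lt_mul_of_pos_left ht.1 hcpos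
    have h2 : 1 - 2*c - c*t < 0 := by linarith
    have := Real.exp_pos t
    nlinarith
  have hGpos : ∀ u : ℝ, 0 < u → u ≤ a → 0 < g u := by
    intro u hu0 hua
    have hm : StrictMonoOn g (Set.Icc 0 u) := by
      apply strictMonoOn_of_deriv_pos (convex_Icc 0 u) hcontg.continuousOn
      intro t ht
      rw [interior_Icc] at ht
      rw [(hdg t).deriv]
      have := hmono' (Set.mem_Icc.mpr ⟨le_rfl, ha0.le⟩)
        (Set.mem_Icc.mpr ⟨ht.1.le, le_trans ht.2.le hua⟩) ht.1
      rw [hg'0] at this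
      exact this
    have h := hm (Set.mem_Icc.mpr ⟨le_rfl, hu0.le⟩) (Set.mem_Icc.mpr ⟨hu0.le, le_rfl⟩) hu0
    have h0 : g 0 = 0 := by simp [hg]
    rw [h0] at h
    exact h
  have hgx : 0 < g x := by
    rcases le_or_gt x a with hxa | hxa
    · exact hGpos x hx0 hxa
    · have hga : 0 < g a := hGpos a ha0 le_rfl
      rcases le_or_gt 0 (g' x) with hgx' | hgx'
      · have hm : StrictMonoOn g (Set.Icc a x) := by
          apply strictMonoOn_of_deriv_pos (convex_Icc a x) hcontg.continuousOn
          intro t ht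
          rw [interior_Icc] at ht
          rw [(hdg t).deriv]
          have := hanti' (Set.mem_Icc.mpr ⟨ht.1.le, by linarith [ht.2]⟩)
            (Set.mem_Icc.mpr ⟨hxa.le, hx1.le⟩) ht.2
          linarith
        have := hm (Set.mem_Icc.mpr ⟨le_rfl, hxa.le⟩) (Set.mem_Icc.mpr ⟨hxa.le, le_rfl⟩) hxa
        linarith
      · have hm : StrictAntiOn g (Set.Icc x 1) := by
          apply strictAntiOn_of_deriv_neg (convex_Icc x 1) hcontg.continuousOn
          intro t ht
          rw [interior_Icc] at ht
          rw [(hdg t).deriv]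
          have := hanti' (Set.mem_Icc.mpr ⟨hxa.le, hx1.le⟩)
            (Set.mem_Icc.mpr ⟨by linarith [ht.1, hxa], ht.2.le⟩) ht.1
          linarith
        have := hm (Set.mem_Icc.mpr ⟨le_rfl, hx1.le⟩) (Set.mem_Icc.mpr ⟨hx1.le, le_rfl⟩) hx1
        rw [hg1] at this
        linarith
  simp only [hg] at hgx
  linarith

theorem z1_mul_Y_lt_x
    (y x : ℝ) (hy : 1 < y) (hx : x ∈ Set.Ioo (0:ℝ) 1)
    (heq : x - Real.log x = y - Real.log y) :
    let Y := y * Real.exp (-y)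
    let c₁ := (Real.exp 1 - 2) / (Real.exp 1 - 1)
    let d₁ := Real.exp 1 - 1 - c₁ * Real.exp 1
    ((1 - d₁ * Y - Real.sqrt ((1 - d₁ * Y)^2 - 4 * c₁ * Y)) / (2 * c₁ * Y)) * Y < x := by
  intro Y c₁ d₁
  obtain ⟨hx0, hx1⟩ := hx
  have hy0 : (0:ℝ) < y := by linarith
  have hYdef : Y = y * Real.exp (-y) := rfl
  have hc₁def : c₁ = (Real.exp 1 - 2) / (Real.exp 1 - 1) := rfl
  have hd₁def : d₁ = Real.exp 1 - 1 - c₁ * Real.exp 1 := rfl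
  have he1 : (2.7:ℝ) < Real.exp 1 := e_gt
  have hcpos : 0 < c₁ := by rw [hc₁def]; apply div_pos <;> linarith
  -- Y = x * exp (-x)
  have hYx : Y = x * Real.exp (-x) := by
    have h1 : Real.log x + (-x) = Real.log y + (-y) := by linarith
    have h2 := congrArg Real.exp h1
    rw [Real.exp_add, Real.exp_add, Real.exp_log hx0, Real.exp_log hy0] at h2
    rw [hYdef, ← h2]
  have hYpos : 0 < Y := by
    rw [hYx]; exact mul_pos hx0 (Real.exp_pos _)
  -- key inequality
  have hkey := key_ineq x hx0 hx1
  rw [← hc₁def, ← hd₁def] at hkey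
  -- quadratic inequality
  have hkey2 : c₁ * x^2 - (1 - d₁ * Y) * x + Y < 0 := by
    have hE := Real.exp_pos x
    have hEF : Real.exp x * Real.exp (-x) = 1 := by
      rw [← Real.exp_add]; simp
    by_contra hcon
    push_neg at hcon
    have h8 : 0 ≤ (c₁ * x^2 - (1 - d₁ * Y) * x + Y) * Real.exp x :=
      mul_nonneg hcon hE.le
    rw [hYx] at h8
    have hid : (c₁ * x^2 - (1 - d₁ * (x * Real.exp (-x))) * x + x * Real.exp (-x)) * Real.exp x
        = c₁ * x^2 * Real.exp x - x * Real.exp x + d₁ * x^2 + x := by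
      rw [Real.exp_neg]
      field_simp
      ring
    rw [hid] at h8
    have hmul := mul_pos hx0 (sub_pos.mpr hkey)
    nlinarith [h8, hmul]
  -- discriminant positive
  have hD : 0 < (1 - d₁ * Y)^2 - 4 * c₁ * Y := by
    nlinarith [hkey2, sq_nonneg (2 * c₁ * x - (1 - d₁ * Y)), hcpos]
  -- sqrt bound
  have hsqrt : 1 - d₁ * Y - 2 * c₁ * x < Real.sqrt ((1 - d₁ * Y)^2 - 4 * c₁ * Y) := by
    rcases le_or_gt (1 - d₁ * Y - 2 * c₁ * x) 0 with h | h
    · exact lt_of_le_of_lt h (Real.sqrt_pos.mpr hD)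
    · rw [show (1 - d₁ * Y - 2 * c₁ * x) = ((1 - d₁ * Y - 2 * c₁ * x)) from rfl]
      rw [← Real.sqrt_sq h.le]
      apply Real.sqrt_lt_sqrt (sq_nonneg _)
      nlinarith [hkey2, hcpos]
  -- conclude
  have hYne : Y ≠ 0 := ne_of_gt hYpos
  have hcne : (2 * c₁ : ℝ) ≠ 0 := by positivity
  have h9 : ((1 - d₁ * Y - Real.sqrt ((1 - d₁ * Y)^2 - 4 * c₁ * Y)) / (2 * c₁ * Y)) * Y
      = (1 - d₁ * Y - Real.sqrt ((1 - d₁ * Y)^2 - 4 * c₁ * Y)) / (2 * c₁) := by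
    field_simp
  rw [h9, div_lt_iff₀ (by positivity : (0:ℝ) < 2 * c₁)]
  linarith [hsqrt]
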